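/- Let G be a locally compact group, 𝒜 an admissible subalgebra of LUC(G) containing C₀(G), and T ⊆ G with closure(ε(T)) ∩ G*G* = ∅ in G^𝒜, where G* = G^𝒜 \ ε(G). Then KT is right translation-compact for every relatively compact subset K of G. -/

import Mathlib

open Pointwise

/-- An abstract model of the compactification `G^𝒜` associated to a unital
left-translation-invariant C*-subalgebra `A` of `CB(G)`: a compact Hausdorff space `X` together
with the (dense-range) evaluation map `ε : G → X`, the natural left action of `G` on `X`
(`(ε(s)x)(f) = x(ₛf)`), and the Gelfand correspondence identifying `A` with `C(X)`. -/
structure GCompactification (G : Type*) [TopologicalSpace G] [Group G]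
    (A : Set (G → ℂ)) (X : Type*) [TopologicalSpace X] [CompactSpace X] [T2Space X] where
  eps : G → X
  dense : DenseRange eps
  act : G → X → X
  act_eps : ∀ s t : G, act s (eps t) = eps (s * t)
  act_mul : ∀ s t : G, ∀ x : X, act (s * t) x = act s (act t x)
  act_cont : ∀ s : G, Continuous (act s)
  gelfand : (G → ℂ) → (X → ℂ)
  gelfand_cont : ∀ f ∈ A, Continuous (gelfand f)
  gelfand_eps : ∀ f ∈ A, ∀ s : G, gelfand f (eps s) = f s
  mem_of_cont : ∀ φ : X → ℂ, Continuous φ → (fun s => φ (eps s)) ∈ A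

/-- The semigroup compactification `G^𝒜` of an admissible subalgebra `A`: additionally `X` carries
an associative multiplication which is right topological, extends that of `G`, and restricts to
the action of `G`. -/
structure GSemigroupCompactification (G : Type*) [TopologicalSpace G] [Group G]
    (A : Set (G → ℂ)) (X : Type*) [TopologicalSpace X] [CompactSpace X] [T2Space X]
    extends GCompactification G A X where
  mul : X → X → X
  mul_assoc : ∀ x y z : X, mul (mul x y) z = mul x (mul y z)
  right_cont : ∀ y : X, Continuous fun x => mul x y
  eps_act : ∀ (s : G) (x : X), mul (eps s) x = act s x

/-- `T` is an `𝒜`-set: for every open neighbourhood `U` of `e` there is an open neighbourhood `V`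
of `e` with `closure V ⊆ U` such that for each `T₁ ⊆ T` some `h ∈ A` is `1` on `VT₁` and `0` off
`UT₁`. -/
def IsASet {G : Type*} [TopologicalSpace G] [Group G] (A : Set (G → ℂ)) (T : Set G) : Prop :=
  ∀ U : Set G, IsOpen U → (1 : G) ∈ U →
    ∃ V : Set G, IsOpen V ∧ (1 : G) ∈ V ∧ closure V ⊆ U ∧
      ∀ T₁ ⊆ T, ∃ h ∈ A, (∀ x ∈ V * T₁, h x = 1) ∧ (∀ x ∉ U * T₁, h x = 0)

/-- Right translation-compact subsets of a topological group. -/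
def RightTranslationCompact {G : Type*} [Group G] [TopologicalSpace G] (T : Set G) : Prop :=
  ∀ L : Set G, ¬ IsCompact (closure L) →
    ∃ F : Set G, F ⊆ L ∧ F.Finite ∧ IsCompact (closure (⋂ b ∈ F, (b * ·) ⁻¹' T))

/-- Theorem 7.1, (i) ⇒ (ii): if `C₀(G) ⊆ 𝒜` and the closure of `ε(T)` in `G^𝒜` misses `G*G*`
(where `G* = G^𝒜 \ ε(G)`), then `KT` is right translation-compact for every relatively compact
`K ⊆ G`. -/
theorem rtc_of_closure_disjoint_from_remainder_products
    {G : Type*} [TopologicalSpace G] [Group G] [IsTopologicalGroup G]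
    [LocallyCompactSpace G] [T2Space G]
    (A : Set (G → ℂ)) {X : Type*} [TopologicalSpace X] [CompactSpace X] [T2Space X]
    (C : GSemigroupCompactification G A X)
    (hC0 : ∀ f : G → ℂ, Continuous f → Filter.Tendsto f (Filter.cocompact G) (nhds 0) → f ∈ A)
    (hjc : Continuous fun p : G × X => C.act p.1 p.2)
    (T : Set G)
    (hT : ∀ p q : X, p ∉ Set.range C.eps → q ∉ Set.range C.eps →
      C.mul p q ∉ closure (C.eps '' T)) :
    ∀ K : Set G, IsCompact (closure K) → RightTranslationCompact (K * T) := by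
  intro K hK L hL
  by_contra hcon
  push_neg at hcon
  -- basic facts about the action
  have act_one : ∀ x : X, C.act 1 x = x := by
    have h1 : C.act 1 = id :=
      C.dense.equalizer (C.act_cont 1) continuous_id
        (funext fun t => by simp [Function.comp, C.act_eps])
    intro x; rw [h1]; rfl
  have act_inv : ∀ (k : G) (x : X), C.act k⁻¹ (C.act k x) = x := by
    intro k x
    rw [← C.act_mul, inv_mul_cancel, act_one]
  -- a point lying in the closure of ε of every co-compact set is not in the range of ε
  have not_range : ∀ p : X,
      (∀ Cs : Set G, IsCompact Cs → p ∈ closure (C.eps '' Csᶜ)) → p ∉ Set.range C.eps := by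
    rintro p hp ⟨s, rfl⟩
    obtain ⟨f, hf1, hf0, hfc, hf01⟩ :=
      exists_continuous_one_zero_of_isCompact (isCompact_singleton (x := s)) isClosed_empty
        (Set.disjoint_empty _)
    set g : G → ℂ := fun t => (f t : ℂ) with hg
    have hgc : HasCompactSupport g :=
      hfc.comp_left (g := fun r : ℝ => (r : ℂ)) (by simp)
    have hgcont : Continuous g := Complex.continuous_ofReal.comp f.continuous
    have hgtend : Filter.Tendsto g (Filter.cocompact G) (nhds 0) := by
      have hmem : (tsupport g)ᶜ ∈ Filter.cocompact G :=
        Filter.hasBasis_cocompact.mem_of_mem hgc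
      refine Filter.Tendsto.congr' ?_
        (tendsto_const_nhds : Filter.Tendsto (fun _ : G => (0 : ℂ)) _ (nhds 0))
      exact Filter.eventuallyEq_of_mem hmem fun x hx =>
        (image_eq_zero_of_notMem_tsupport hx).symm
    have hgA : g ∈ A := hC0 g hgcont hgtend
    have h0 : C.gelfand g (C.eps s) = 0 := by
      have hcl : IsClosed {x : X | C.gelfand g x = 0} :=
        isClosed_eq (C.gelfand_cont g hgA) continuous_const
      have hsub : closure (C.eps '' (tsupport g)ᶜ) ⊆ {x : X | C.gelfand g x = 0} := by
        refine closure_minimal ?_ hcl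
        rintro _ ⟨t, ht, rfl⟩
        show C.gelfand g (C.eps t) = 0
        rw [C.gelfand_eps g hgA]
        exact image_eq_zero_of_notMem_tsupport ht
      exact hsub (hp (tsupport g) hgc)
    rw [C.gelfand_eps g hgA] at h0
    have : g s = 1 := by
      simp only [hg]
      rw [hf1 rfl]
      simp
    rw [this] at h0
    exact one_ne_zero h0
  -- nonemptiness of the basic sets
  have hWne : ∀ F : Set G, F ⊆ L → F.Finite → ∀ Cs : Set G, IsCompact Cs →
      ((⋂ b ∈ F, (b * ·) ⁻¹' (K * T)) \ Cs).Nonempty := by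
    intro F hFL hFfin Cs hCs
    rw [Set.nonempty_iff_ne_empty]
    intro hempty
    have hsub : (⋂ b ∈ F, (b * ·) ⁻¹' (K * T)) ⊆ Cs := Set.diff_eq_empty.mp hempty
    exact hcon F hFL hFfin
      (hCs.of_isClosed_subset isClosed_closure (closure_minimal hsub hCs.isClosed))
  have hLne : ∀ Cs : Set G, IsCompact Cs → (L \ Cs).Nonempty := by
    intro Cs hCs
    rw [Set.nonempty_iff_ne_empty]
    intro hempty
    exact hL (hCs.of_isClosed_subset isClosed_closure
      (closure_minimal (Set.diff_eq_empty.mp hempty) hCs.isClosed))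
  -- the filter for q
  let ι := {F : Set G // F ⊆ L ∧ F.Finite} × {Cs : Set G // IsCompact Cs}
  have hι : Nonempty ι :=
    ⟨⟨⟨∅, Set.empty_subset L, Set.finite_empty⟩, ⟨∅, isCompact_empty⟩⟩⟩
  let fq : ι → Filter G :=
    fun i => Filter.principal ((⋂ b ∈ i.1.1, (b * ·) ⁻¹' (K * T)) \ i.2.1)
  have hdir : Directed (· ≥ ·) fq := by
    rintro ⟨⟨F₁, hF₁⟩, ⟨C₁, hC₁⟩⟩ ⟨⟨F₂, hF₂⟩, ⟨C₂, hC₂⟩⟩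
    refine ⟨⟨⟨F₁ ∪ F₂, Set.union_subset hF₁.1 hF₂.1, hF₁.2.union hF₂.2⟩,
      ⟨C₁ ∪ C₂, hC₁.union hC₂⟩⟩, ?_, ?_⟩ <;>
    · simp only [fq, ge_iff_le, Filter.principal_mono]
      rintro x ⟨hx1, hx2⟩
      constructor
      · refine Set.mem_iInter₂.mpr fun b hb => Set.mem_iInter₂.mp hx1 b ?_
        first
        | exact Set.mem_union_left _ hb
        | exact Set.mem_union_right _ hb
      · intro hx
        exact hx2 (by first
          | exact Set.mem_union_left _ hx
          | exact Set.mem_union_right _ hx)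
  haveI : Nonempty ι := hι
  haveI hqnb : (⨅ i, fq i).NeBot := by
    refine Filter.iInf_neBot_of_directed' hdir fun i => ?_
    rw [Filter.principal_neBot_iff]
    exact hWne i.1.1 i.1.2.1 i.1.2.2 i.2.1 i.2.2
  haveI : (Filter.map C.eps (⨅ i, fq i)).NeBot := Filter.NeBot.map hqnb C.eps
  obtain ⟨q, hq⟩ := exists_clusterPt_of_compactSpace (Filter.map C.eps (⨅ i, fq i))
  have hq' : ∀ (F : Set G), F ⊆ L → F.Finite → ∀ (Cs : Set G), IsCompact Cs →
      q ∈ closure (C.eps '' ((⋂ b ∈ F, (b * ·) ⁻¹' (K * T)) \ Cs)) := by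
    intro F hFL hFfin Cs hCs
    rw [mem_closure_iff_clusterPt]
    refine hq.mono ?_
    have hle : (⨅ i, fq i) ≤ fq ⟨⟨F, hFL, hFfin⟩, ⟨Cs, hCs⟩⟩ := iInf_le fq _
    calc Filter.map C.eps (⨅ i, fq i)
        ≤ Filter.map C.eps (fq ⟨⟨F, hFL, hFfin⟩, ⟨Cs, hCs⟩⟩) := Filter.map_mono hle
      _ = Filter.principal (C.eps '' ((⋂ b ∈ F, (b * ·) ⁻¹' (K * T)) \ Cs)) :=
          Filter.map_principal
  -- the filter for p
  let fp : {Cs : Set G // IsCompact Cs} → Filter G :=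
    fun Cs => Filter.principal (L \ Cs.1)
  have hdirp : Directed (· ≥ ·) fp := by
    rintro ⟨C₁, hC₁⟩ ⟨C₂, hC₂⟩
    refine ⟨⟨C₁ ∪ C₂, hC₁.union hC₂⟩, ?_, ?_⟩ <;>
    · simp only [fp, ge_iff_le, Filter.principal_mono]
      rintro x ⟨hx1, hx2⟩
      exact ⟨hx1, fun hx => hx2 (by first
        | exact Set.mem_union_left _ hx
        | exact Set.mem_union_right _ hx)⟩
  haveI : Nonempty {Cs : Set G // IsCompact Cs} := ⟨⟨∅, isCompact_empty⟩⟩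
  haveI hpnb : (⨅ Cs, fp Cs).NeBot := by
    refine Filter.iInf_neBot_of_directed' hdirp fun Cs => ?_
    rw [Filter.principal_neBot_iff]
    exact hLne Cs.1 Cs.2
  haveI : (Filter.map C.eps (⨅ Cs, fp Cs)).NeBot := Filter.NeBot.map hpnb C.eps
  obtain ⟨p, hp⟩ := exists_clusterPt_of_compactSpace (Filter.map C.eps (⨅ Cs, fp Cs))
  have hp' : ∀ (Cs : Set G), IsCompact Cs → p ∈ closure (C.eps '' (L \ Cs)) := by
    intro Cs hCs
    rw [mem_closure_iff_clusterPt]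
    refine hp.mono ?_
    calc Filter.map C.eps (⨅ Cs, fp Cs)
        ≤ Filter.map C.eps (fp ⟨Cs, hCs⟩) := Filter.map_mono (iInf_le fp _)
      _ = Filter.principal (C.eps '' (L \ Cs)) := Filter.map_principal
  -- p and q are not in the range of ε
  have hpnr : p ∉ Set.range C.eps := by
    refine not_range p fun Cs hCs => ?_
    exact closure_mono (Set.image_mono fun x hx => hx.2) (hp' Cs hCs)
  have hqnr : q ∉ Set.range C.eps := by
    refine not_range q fun Cs hCs => ?_
    exact closure_mono (Set.image_mono fun x hx => hx.2)
      (hq' ∅ (Set.empty_subset L) Set.finite_empty Cs hCs)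
  -- the translates of q land in the closure of ε(KT)
  have hbq : ∀ b ∈ L, C.act b q ∈ closure (C.eps '' (K * T)) := by
    intro b hb
    have h1 : q ∈ closure (C.eps '' ((⋂ b' ∈ ({b} : Set G), (b' * ·) ⁻¹' (K * T)) \ ∅)) :=
      hq' {b} (Set.singleton_subset_iff.mpr hb) (Set.finite_singleton b) ∅ isCompact_empty
    have h2 : C.act b q ∈
        closure (C.act b '' (C.eps '' ((⋂ b' ∈ ({b} : Set G), (b' * ·) ⁻¹' (K * T)) \ ∅))) :=
      image_closure_subset_closure_image (C.act_cont b) ⟨q, h1, rfl⟩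
    refine closure_mono ?_ h2
    rintro _ ⟨_, ⟨w, hw, rfl⟩, rfl⟩
    rw [C.act_eps]
    exact Set.mem_image_of_mem _ (Set.mem_iInter₂.mp hw.1 b rfl)
  -- hence so does mul p q
  have hpq : C.mul p q ∈ closure (C.eps '' (K * T)) := by
    have hpL : p ∈ closure (C.eps '' L) := by
      simpa [Set.diff_empty] using hp' ∅ isCompact_empty
    have h2 : C.mul p q ∈ closure ((fun x => C.mul x q) '' (C.eps '' L)) :=
      image_closure_subset_closure_image (C.right_cont q) ⟨p, hpL, rfl⟩
    have h3 : (fun x => C.mul x q) '' (C.eps '' L) ⊆ closure (C.eps '' (K * T)) := by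
      rintro _ ⟨_, ⟨b, hb, rfl⟩, rfl⟩
      show C.mul (C.eps b) q ∈ closure (C.eps '' (K * T))
      rw [C.eps_act]
      exact hbq b hb
    have := closure_mono h3 h2
    rwa [closure_closure] at this
  -- a compact set containing ε(KT)
  set S : Set X := (fun kx : G × X => C.act kx.1 kx.2) '' (closure K ×ˢ closure (C.eps '' T))
    with hS
  have hScompact : IsCompact S := (hK.prod isClosed_closure.isCompact).image hjc
  have hSsub : C.eps '' (K * T) ⊆ S := by
    rintro _ ⟨x, hx, rfl⟩
    rcases hx with ⟨k, hk, t, ht, rfl⟩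
    exact ⟨(k, C.eps t), ⟨subset_closure hk, subset_closure ⟨t, ht, rfl⟩⟩, C.act_eps k t⟩
  have hmulS : C.mul p q ∈ S := closure_minimal hSsub hScompact.isClosed hpq
  obtain ⟨⟨k, x⟩, ⟨hk, hx⟩, heq⟩ := hmulS
  have heq' : C.act k x = C.mul p q := heq
  have act_inv' : ∀ (k : G) (y : X), C.act k (C.act k⁻¹ y) = y := by
    intro k y
    have h := act_inv k⁻¹ y
    rwa [inv_inv] at h
  -- derive the contradiction via hT
  have hp'nr : C.act k⁻¹ p ∉ Set.range C.eps := by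
    rintro ⟨s, hs⟩
    refine hpnr ⟨k * s, ?_⟩
    rw [← C.act_eps, hs, act_inv']
  have hx_eq : C.mul (C.act k⁻¹ p) q = x := by
    have h1 : C.mul (C.act k⁻¹ p) q = C.act k⁻¹ (C.mul p q) := by
      rw [← C.eps_act, C.mul_assoc, C.eps_act]
    rw [h1, ← heq', act_inv]
  exact hT (C.act k⁻¹ p) q hp'nr hqnr (hx_eq ▸ hx)
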